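/- Stability theorem: let A ∈ ℝ^{n×l} have full row rank, ĥf ∈ Ker(A), M ⊆ {1,…,l} containing a base set, f_M = ĥf_M + e_M, S ⊆ M with Rec(S; A, M) = α > 1, and f* = Z x* with x* an ℓ1 minimizer of ‖Z_M x − f_M‖₁. Then ‖f* − ĥf‖₁ ≤ (2(α+1)/(α−1)) · min over base sets K ⊆ M of (‖(A^{K^c})^{-1} A^K‖₁ + 1) · ‖e_{M∖S}‖₁, where ‖·‖₁ on matrices is the operator norm induced by the ℓ1 vector norm. -/

import Mathlib

open Finset

noncomputable def l1OpNorm {p q : ℕ} (B : Matrix (Fin p) (Fin q) ℝ) : ℝ :=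
  sSup {r : ℝ | ∃ x : Fin q → ℝ, x ≠ 0 ∧
    r = (∑ i, |B.mulVec x i|) / (∑ j, |x j|)}

lemma l1_sum_pos {q : ℕ} {x : Fin q → ℝ} (hx : x ≠ 0) : 0 < ∑ j, |x j| := by
  rcases Function.ne_iff.mp hx with ⟨j, hj⟩
  refine lt_of_lt_of_le (abs_pos.mpr hj)
    (Finset.single_le_sum (f := fun i => |x i|) (fun i _ => abs_nonneg _) (mem_univ j))

lemma l1_ratio_bdd {p q : ℕ} (B : Matrix (Fin p) (Fin q) ℝ) :
    ∀ r ∈ {r : ℝ | ∃ x : Fin q → ℝ, x ≠ 0 ∧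
      r = (∑ i, |B.mulVec x i|) / (∑ j, |x j|)},
      r ≤ ∑ j, ∑ i, |B i j| := by
  rintro r ⟨x, hx, rfl⟩
  have hs := l1_sum_pos hx
  rw [div_le_iff₀ hs]
  calc ∑ i, |B.mulVec x i| ≤ ∑ i, ∑ j, |B i j| * |x j| := by
        refine Finset.sum_le_sum fun i _ => ?_
        simp only [Matrix.mulVec, dotProduct]
        exact (Finset.abs_sum_le_sum_abs _ _).trans (le_of_eq (by simp [abs_mul]))
    _ = ∑ j, (∑ i, |B i j|) * |x j| := by
        rw [Finset.sum_comm]; simp [Finset.sum_mul]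
    _ ≤ ∑ j, (∑ j', ∑ i, |B i j'|) * |x j| := by
        refine Finset.sum_le_sum fun j _ => mul_le_mul_of_nonneg_right ?_ (abs_nonneg _)
        exact Finset.single_le_sum (f := fun j' => ∑ i, |B i j'|)
          (fun j' _ => Finset.sum_nonneg fun i _ => abs_nonneg _) (mem_univ j)
    _ = (∑ j', ∑ i, |B i j'|) * ∑ j, |x j| := by rw [← Finset.mul_sum]

lemma l1OpNorm_nonneg {p q : ℕ} (B : Matrix (Fin p) (Fin q) ℝ) : 0 ≤ l1OpNorm B := by
  unfold l1OpNorm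
  rcases Set.eq_empty_or_nonempty {r : ℝ | ∃ x : Fin q → ℝ, x ≠ 0 ∧
      r = (∑ i, |B.mulVec x i|) / (∑ j, |x j|)} with h | ⟨r, hr⟩
  · rw [h, Real.sSup_empty]
  · obtain ⟨x, hx, rfl⟩ := hr
    have hr0 : (0:ℝ) ≤ (∑ i, |B.mulVec x i|) / (∑ j, |x j|) :=
      div_nonneg (Finset.sum_nonneg fun i _ => abs_nonneg _)
        (Finset.sum_nonneg fun j _ => abs_nonneg _)
    exact hr0.trans (le_csSup ⟨_, l1_ratio_bdd B⟩ ⟨x, hx, rfl⟩)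

lemma mulVec_l1_le {p q : ℕ} (B : Matrix (Fin p) (Fin q) ℝ) (x : Fin q → ℝ) :
    (∑ i, |B.mulVec x i|) ≤ l1OpNorm B * ∑ j, |x j| := by
  by_cases hx : x = 0
  · subst hx; simp [Matrix.mulVec_zero]
  · have hs := l1_sum_pos hx
    have hmem : (∑ i, |B.mulVec x i|) / (∑ j, |x j|) ∈ {r : ℝ | ∃ x : Fin q → ℝ, x ≠ 0 ∧
        r = (∑ i, |B.mulVec x i|) / (∑ j, |x j|)} := ⟨x, hx, rfl⟩
    have hle := le_csSup ⟨_, l1_ratio_bdd B⟩ hmem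
    rw [div_le_iff₀ hs] at hle
    exact hle

theorem stmt8 (n l : ℕ) (A : Matrix (Fin n) (Fin l) ℝ) (hrank : A.rank = n)
    (Z : Matrix (Fin l) (Fin (l - n)) ℝ)
    (hZ : ∀ f : Fin l → ℝ, A.mulVec f = 0 ↔ ∃ x : Fin (l - n) → ℝ, Z.mulVec x = f)
    (hf : Fin l → ℝ) (hhf : A.mulVec hf = 0)
    (M : Finset (Fin l)) (e : Fin l → ℝ)
    (fobs : Fin l → ℝ) (hfobs : ∀ i ∈ M, fobs i = hf i + e i)
    (S : Finset (Fin l)) (hSM : S ⊆ M)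
    (hBase : ∃ K : Finset (Fin l), K ⊆ M ∧ K.card = l - n ∧
      ∃ eKc : Fin n ≃ {i : Fin l // i ∈ Kᶜ},
        IsUnit (Matrix.of fun i j => A i (eKc j).1).det)
    (α : ℝ) (hα : 1 < α)
    (hRec : α = sInf {r : ℝ | ∃ v : Fin (l - n) → ℝ,
      (∑ i ∈ S, |Z.mulVec v i|) ≠ 0 ∧
      r = (∑ i ∈ M \ S, |Z.mulVec v i|) / (∑ i ∈ S, |Z.mulVec v i|)})
    (xstar : Fin (l - n) → ℝ)
    (hmin : ∀ x : Fin (l - n) → ℝ,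
      (∑ i ∈ M, |Z.mulVec xstar i - fobs i|) ≤ ∑ i ∈ M, |Z.mulVec x i - fobs i|) :
    (∑ i, |Z.mulVec xstar i - hf i|) ≤
      (2 * (α + 1) / (α - 1)) *
        sInf {c : ℝ | ∃ K : Finset (Fin l), K ⊆ M ∧ K.card = l - n ∧
          ∃ (eK : Fin (l - n) ≃ {i : Fin l // i ∈ K})
            (eKc : Fin n ≃ {i : Fin l // i ∈ Kᶜ}),
            IsUnit (Matrix.of fun i j => A i (eKc j).1).det ∧
            c = l1OpNorm ((Matrix.of fun i j => A i (eKc j).1)⁻¹ *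
                  (Matrix.of fun i j => A i (eK j).1)) + 1} *
        ∑ i ∈ M \ S, |e i| := by
  obtain ⟨y, hy⟩ := (hZ hf).mp hhf
  set h : Fin l → ℝ := fun i => Z.mulVec xstar i - hf i with hhdef
  have hZv : Z.mulVec (xstar - y) = h := by
    funext i
    simp [hhdef, Matrix.mulVec_sub, hy]
  have hker : A.mulVec h = 0 := (hZ h).mpr ⟨xstar - y, hZv⟩
  set E := ∑ i ∈ M \ S, |e i| with hE
  have hE0 : 0 ≤ E := Finset.sum_nonneg fun i _ => abs_nonneg _
  set tS := ∑ i ∈ S, |h i| with htSdef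
  set tMS := ∑ i ∈ M \ S, |h i| with htMSdef
  have htS0 : 0 ≤ tS := Finset.sum_nonneg fun i _ => abs_nonneg _
  have htMS0 : 0 ≤ tMS := Finset.sum_nonneg fun i _ => abs_nonneg _
  have hsplitM : ∀ g : Fin l → ℝ, ∑ i ∈ M, g i = ∑ i ∈ S, g i + ∑ i ∈ M \ S, g i := by
    intro g
    rw [← Finset.sum_sdiff hSM]
    ring
  -- minimality
  have hmin' : ∑ i ∈ M, |h i - e i| ≤ ∑ i ∈ S, |e i| + E := by
    have h1 : ∑ i ∈ M, |Z.mulVec xstar i - fobs i| = ∑ i ∈ M, |h i - e i| :=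
      Finset.sum_congr rfl fun i hi => by rw [hfobs i hi]; congr 1; simp [hhdef]; ring
    have h2 : ∑ i ∈ M, |Z.mulVec y i - fobs i| = ∑ i ∈ M, |e i| :=
      Finset.sum_congr rfl fun i hi => by
        rw [hfobs i hi, show Z.mulVec y i = hf i from congrFun hy i]
        simp [abs_sub_comm]
    have := hmin y
    rw [h1, h2, hsplitM (fun i => |e i|)] at this
    exact this
  -- triangle
  have key : tMS ≤ tS + 2 * E := by
    have lb1 : ∑ i ∈ S, |e i| - tS ≤ ∑ i ∈ S, |h i - e i| := by
      rw [htSdef, ← Finset.sum_sub_distrib]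
      refine Finset.sum_le_sum fun i _ => ?_
      have h3 := abs_sub_abs_le_abs_sub (e i) (h i)
      rw [abs_sub_comm (e i) (h i)] at h3
      linarith
    have lb2 : tMS - E ≤ ∑ i ∈ M \ S, |h i - e i| := by
      rw [htMSdef, hE, ← Finset.sum_sub_distrib]
      refine Finset.sum_le_sum fun i _ => ?_
      have h3 := abs_sub_abs_le_abs_sub (h i) (e i)
      linarith
    rw [hsplitM (fun i => |h i - e i|)] at hmin'
    linarith
  -- Rec bound
  have hrec : α * tS ≤ tMS := by
    rcases eq_or_ne tS 0 with h0 | h0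
    · rw [h0, mul_zero]; exact htMS0
    · have habs : ∀ i, |Z.mulVec (xstar - y) i| = |h i| := fun i => by rw [hZv]
      have hmem : tMS / tS ∈ {r : ℝ | ∃ v : Fin (l - n) → ℝ,
          (∑ i ∈ S, |Z.mulVec v i|) ≠ 0 ∧
          r = (∑ i ∈ M \ S, |Z.mulVec v i|) / (∑ i ∈ S, |Z.mulVec v i|)} :=
        ⟨xstar - y, by simp only [habs]; exact h0, by simp only [habs]; rfl⟩
      have hbdd : BddBelow {r : ℝ | ∃ v : Fin (l - n) → ℝ,
          (∑ i ∈ S, |Z.mulVec v i|) ≠ 0 ∧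
          r = (∑ i ∈ M \ S, |Z.mulVec v i|) / (∑ i ∈ S, |Z.mulVec v i|)} := by
        refine ⟨0, ?_⟩
        rintro r ⟨v, hv, rfl⟩
        exact div_nonneg (Finset.sum_nonneg fun i _ => abs_nonneg _)
          (Finset.sum_nonneg fun i _ => abs_nonneg _)
      have hle := csInf_le hbdd hmem
      rw [← hRec] at hle
      have htSpos : 0 < tS := lt_of_le_of_ne htS0 (Ne.symm h0)
      rw [le_div_iff₀ htSpos] at hle
      exact hle
  have hα1 : (0:ℝ) < α - 1 := by linarith
  have hM : tS + tMS ≤ 2 * (α + 1) / (α - 1) * E := by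
    have htS : (α - 1) * tS ≤ 2 * E := by linarith
    rw [div_mul_eq_mul_div, le_div_iff₀ hα1]
    nlinarith
  -- base set bound
  have hcbound : ∀ c ∈ {c : ℝ | ∃ K : Finset (Fin l), K ⊆ M ∧ K.card = l - n ∧
          ∃ (eK : Fin (l - n) ≃ {i : Fin l // i ∈ K})
            (eKc : Fin n ≃ {i : Fin l // i ∈ Kᶜ}),
            IsUnit (Matrix.of fun i j => A i (eKc j).1).det ∧
            c = l1OpNorm ((Matrix.of fun i j => A i (eKc j).1)⁻¹ *
                  (Matrix.of fun i j => A i (eK j).1)) + 1},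
      (∑ i, |h i|) ≤ c * (tS + tMS) := by
    rintro c ⟨K, hKM, hKcard, eK, eKc, hdet, rfl⟩
    set AKc := (Matrix.of fun i j => A i (eKc j).1) with hAKcdef
    set AK := (Matrix.of fun i j => A i (eK j).1) with hAKdef
    set B := AKc⁻¹ * AK with hBdef
    set u : Fin n → ℝ := fun j => h (eKc j).1 with hudef
    set w : Fin (l - n) → ℝ := fun j => h (eK j).1 with hwdef
    have hKsum : ∑ i ∈ K, |h i| = ∑ j, |w j| := by
      rw [← Finset.sum_coe_sort K (fun i => |h i|)]
      exact (Equiv.sum_comp eK (fun i : {x : Fin l // x ∈ K} => |h i.1|)).symm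
    have hKcsum : ∑ i ∈ Kᶜ, |h i| = ∑ j, |u j| := by
      rw [← Finset.sum_coe_sort Kᶜ (fun i => |h i|)]
      exact (Equiv.sum_comp eKc (fun i : {x : Fin l // x ∈ Kᶜ} => |h i.1|)).symm
    have hAKcu : AKc.mulVec u = - AK.mulVec w := by
      funext i
      have h0 : (0:ℝ) = ∑ j ∈ K, A i j * h j + ∑ j ∈ Kᶜ, A i j * h j := by
        rw [Finset.sum_add_sum_compl]
        have := congrFun hker i
        simp only [Matrix.mulVec, dotProduct, Pi.zero_apply] at this
        rw [← this]
      have e1 : ∑ j ∈ K, A i j * h j = AK.mulVec w i := by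
        rw [← Finset.sum_coe_sort K (fun j => A i j * h j),
          ← Equiv.sum_comp eK (fun j : {x : Fin l // x ∈ K} => A i j.1 * h j.1)]
        simp [hAKdef, Matrix.mulVec, dotProduct, hwdef]
      have e2 : ∑ j ∈ Kᶜ, A i j * h j = AKc.mulVec u i := by
        rw [← Finset.sum_coe_sort Kᶜ (fun j => A i j * h j),
          ← Equiv.sum_comp eKc (fun j : {x : Fin l // x ∈ Kᶜ} => A i j.1 * h j.1)]
        simp [hAKcdef, Matrix.mulVec, dotProduct, hudef]
      rw [e1, e2] at h0
      simp only [Pi.neg_apply]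
      linarith
    have hu : u = fun j => -(B.mulVec w j) := by
      have h1 : AKc⁻¹.mulVec (AKc.mulVec u) = u := by
        rw [Matrix.mulVec_mulVec, Matrix.nonsing_inv_mul _ hdet, Matrix.one_mulVec]
      rw [hAKcu] at h1
      funext j
      rw [← congrFun h1 j]
      simp [Matrix.mulVec_neg, Matrix.mulVec_mulVec, hBdef]
    have hest : ∑ j, |u j| ≤ l1OpNorm B * ∑ j, |w j| := by
      rw [hu]
      simpa using mulVec_l1_le B w
    have hwM : ∑ j, |w j| ≤ tS + tMS := by
      rw [← hKsum, ← hsplitM (fun i => |h i|)]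
      exact Finset.sum_le_sum_of_subset_of_nonneg hKM fun i _ _ => abs_nonneg _
    have hBn := l1OpNorm_nonneg B
    calc ∑ i, |h i| = ∑ i ∈ K, |h i| + ∑ i ∈ Kᶜ, |h i| :=
          (Finset.sum_add_sum_compl K (fun i => |h i|)).symm
      _ = ∑ j, |w j| + ∑ j, |u j| := by rw [hKsum, hKcsum]
      _ ≤ ∑ j, |w j| + l1OpNorm B * ∑ j, |w j| := by linarith
      _ = (l1OpNorm B + 1) * ∑ j, |w j| := by ring
      _ ≤ (l1OpNorm B + 1) * (tS + tMS) := by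
          refine mul_le_mul_of_nonneg_left hwM (by linarith)
  -- assemble
  have hne : Set.Nonempty {c : ℝ | ∃ K : Finset (Fin l), K ⊆ M ∧ K.card = l - n ∧
          ∃ (eK : Fin (l - n) ≃ {i : Fin l // i ∈ K})
            (eKc : Fin n ≃ {i : Fin l // i ∈ Kᶜ}),
            IsUnit (Matrix.of fun i j => A i (eKc j).1).det ∧
            c = l1OpNorm ((Matrix.of fun i j => A i (eKc j).1)⁻¹ *
                  (Matrix.of fun i j => A i (eK j).1)) + 1} := by
    obtain ⟨K, hKM, hKcard, eKc, hdet⟩ := hBase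
    have hcardeq : Fintype.card (Fin (l - n)) = Fintype.card {i : Fin l // i ∈ K} := by
      simp [Fintype.card_coe, hKcard]
    exact ⟨_, K, hKM, hKcard, Fintype.equivOfCardEq hcardeq, eKc, hdet, rfl⟩
  have hgoal : (∑ i, |Z.mulVec xstar i - hf i|) = ∑ i, |h i| := rfl
  rw [hgoal]
  have hfac : (0:ℝ) < 2 * (α + 1) / (α - 1) := by
    apply div_pos <;> linarith
  rcases eq_or_lt_of_le hE0 with hE0' | hEpos
  · obtain ⟨c0, hc0⟩ := hne
    have hle := (hcbound c0 hc0).trans (mul_le_mul_of_nonneg_left hM ?hc0n)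
    case hc0n =>
      obtain ⟨K, hKM, hKcard, eK, eKc, hdet, rfl⟩ := hc0
      have := l1OpNorm_nonneg ((Matrix.of fun i j => A i (eKc j).1)⁻¹ *
                  (Matrix.of fun i j => A i (eK j).1))
      linarith
    rw [← hE0'] at hle ⊢
    simpa using hle
  · have hlb : ∀ c ∈ {c : ℝ | ∃ K : Finset (Fin l), K ⊆ M ∧ K.card = l - n ∧
          ∃ (eK : Fin (l - n) ≃ {i : Fin l // i ∈ K})
            (eKc : Fin n ≃ {i : Fin l // i ∈ Kᶜ}),
            IsUnit (Matrix.of fun i j => A i (eKc j).1).det ∧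
            c = l1OpNorm ((Matrix.of fun i j => A i (eKc j).1)⁻¹ *
                  (Matrix.of fun i j => A i (eK j).1)) + 1},
        (∑ i, |h i|) / (2 * (α + 1) / (α - 1) * E) ≤ c := by
      intro c hc
      have hc0 : (0:ℝ) ≤ c := by
        obtain ⟨K, hKM, hKcard, eK, eKc, hdet, rfl⟩ := hc
        have := l1OpNorm_nonneg ((Matrix.of fun i j => A i (eKc j).1)⁻¹ *
                  (Matrix.of fun i j => A i (eK j).1))
        linarith
      rw [div_le_iff₀ (by positivity)]
      calc ∑ i, |h i| ≤ c * (tS + tMS) := hcbound c hc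
        _ ≤ c * (2 * (α + 1) / (α - 1) * E) := mul_le_mul_of_nonneg_left hM hc0
    have hsinf := le_csInf hne hlb
    rw [div_le_iff₀ (by positivity)] at hsinf
    calc (∑ i, |h i|) ≤ sInf _ * (2 * (α + 1) / (α - 1) * E) := hsinf
      _ = 2 * (α + 1) / (α - 1) * sInf _ * E := by ring
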